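/- arXiv:2010.01473 — 2 statements merged into one kernel-verified Lean document; each statement's English description precedes it below -/
import Mathlib

section
/- For every point W in the parameter space ℝⁿ of a finite ReLU neural network, except on a set of Lebesgue measure zero, there exists an open neighborhood of W on which every pre-activation value of the network (at a fixed input) keeps a constant sign (either ≥ 0 throughout or ≤ 0 throughout the neighborhood); consequently on this neighborhood each ReLU acts as a fixed binary mask (multiplication by 0 or 1). -/
open MeasureTheory

/-- The zero set of a nonzero multivariate polynomial over ℝ has Lebesgue measure zero. -/
lemma mv_zero_set_null : ∀ (n : ℕ) (q : MvPolynomial (Fin n) ℝ), q ≠ 0 →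
    volume {W : Fin n → ℝ | MvPolynomial.eval W q = 0} = 0 := by
  intro n
  induction n with
  | zero =>
    intro q hq
    obtain ⟨a, rfl⟩ := MvPolynomial.C_surjective (Fin 0) q
    have ha : a ≠ 0 := fun h => hq (by simp [h])
    have h0 : {W : Fin 0 → ℝ | MvPolynomial.eval W (MvPolynomial.C a) = 0} = ∅ := by
      ext W; simp [ha]
    rw [h0, measure_empty]
  | succ n ih =>
    intro q hq
    set Q : Polynomial (MvPolynomial (Fin n) ℝ) := MvPolynomial.finSuccEquiv ℝ n q with hQ
    have hQne : Q ≠ 0 := by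
      intro h
      apply hq
      have := (MvPolynomial.finSuccEquiv ℝ n).injective (a₁ := q) (a₂ := 0)
      simp only [map_zero] at this
      exact this h
    have hlc : Q.leadingCoeff ≠ 0 := Polynomial.leadingCoeff_ne_zero.mpr hQne
    -- the "bad" section set in (Fin n → ℝ) × ℝ
    set Z : Set ((Fin n → ℝ) × ℝ) :=
      {x | MvPolynomial.eval (Fin.cons x.2 x.1) q = 0} with hZ
    have hcontZ : Continuous fun x : (Fin n → ℝ) × ℝ =>
        MvPolynomial.eval (Fin.cons x.2 x.1 : Fin (n+1) → ℝ) q := by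
      apply (MvPolynomial.continuous_eval (p := q)).comp
      apply continuous_pi
      intro i
      refine Fin.cases ?_ ?_ i
      · simpa using continuous_snd
      · intro j
        have hj : Continuous fun a : (Fin n → ℝ) × ℝ => a.1 j := (continuous_apply j).comp continuous_fst
        simpa using hj
    have hZmeas : MeasurableSet Z := (isClosed_singleton.preimage hcontZ).measurableSet
    -- sections are null for a.e. s
    have hsec : (volume.prod volume) Z = 0 := by
      rw [Measure.measure_prod_null hZmeas]
      have hsub : {s : Fin n → ℝ | ¬ (volume (Prod.mk s ⁻¹' Z) = 0)} ⊆
          {s : Fin n → ℝ | MvPolynomial.eval s Q.leadingCoeff = 0} := by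
        intro s hs
        by_contra hle
        apply hs
        have hmapne : Q.map (MvPolynomial.eval s) ≠ 0 := by
          intro h
          apply hle
          have h2 := congrArg (fun r => Polynomial.coeff r Q.natDegree) h
          simp only [Polynomial.coeff_map, Polynomial.coeff_zero] at h2
          exact Set.mem_setOf_eq ▸ h2
        have : Prod.mk s ⁻¹' Z ⊆ {y : ℝ | (Q.map (MvPolynomial.eval s)).IsRoot y} := by
          intro y hy
          simp only [Set.mem_preimage, hZ, Set.mem_setOf_eq] at hy
          rw [MvPolynomial.eval_eq_eval_mv_eval'] at hy
          exact hy
        exact measure_mono_null this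
          ((Polynomial.finite_setOf_isRoot hmapne).measure_zero _)
      have hnull : volume {s : Fin n → ℝ | MvPolynomial.eval s Q.leadingCoeff = 0} = 0 :=
        ih Q.leadingCoeff hlc
      have : volume {s : Fin n → ℝ | ¬ (volume (Prod.mk s ⁻¹' Z) = 0)} = 0 :=
        measure_mono_null hsub hnull
      filter_upwards [(ae_iff).mpr this] with s hs
      simpa using hs
    -- transfer back to the pi space
    have hmp := MeasureTheory.volume_preserving_piFinSuccAbove (fun _ : Fin (n+1) => ℝ) 0
    set e := MeasurableEquiv.piFinSuccAbove (fun _ : Fin (n+1) => ℝ) 0 with he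
    have key : {W : Fin (n+1) → ℝ | MvPolynomial.eval W q = 0}
        = e ⁻¹' (Prod.swap ⁻¹' Z) := by
      ext W
      simp only [Set.mem_preimage, Set.mem_setOf_eq, hZ, Prod.swap]
      have hW : (Fin.cons (e W).1 ((e W).2) : Fin (n+1) → ℝ) = W := by
        ext i
        refine Fin.cases ?_ ?_ i
        · simp [he, MeasurableEquiv.piFinSuccAbove]
        · intro j
          simp [he, MeasurableEquiv.piFinSuccAbove, Fin.succAbove, Fin.tail]
      rw [hW]
    rw [key]
    have hswapmeas : MeasurableSet (Prod.swap ⁻¹' Z : Set (ℝ × (Fin n → ℝ))) :=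
      hZmeas.preimage measurable_swap
    rw [hmp.measure_preimage hswapmeas.nullMeasurableSet]
    rw [Measure.volume_eq_prod]
    rw [(Measure.measurePreserving_swap (μ := volume) (ν := volume)).measure_preimage hZmeas.nullMeasurableSet]
    exact hsec

/-- For a finite ReLU network, whose pre-activations `F j` (at a fixed input)
are continuous piecewise-polynomial functions of the parameter vector `W ∈ ℝⁿ` (the pieces
being finitely many nonzero polynomials, one per binary ReLU configuration), there is a
Lebesgue measure-zero set outside of which every parameter `W` has an open neighborhood on
which each pre-activation keeps a constant sign; consequently each ReLU acts there as a
fixed binary mask (multiplication by 0 or 1). -/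
theorem relu_network_locally_fixed_mask_ae
    (n m K : ℕ) (F : Fin m → (Fin n → ℝ) → ℝ)
    (hcont : ∀ j, Continuous (F j))
    (p : Fin m → Fin K → MvPolynomial (Fin n) ℝ)
    (hp : ∀ j i, p j i ≠ 0)
    (hpiece : ∀ j (W : Fin n → ℝ), ∃ i, F j W = MvPolynomial.eval W (p j i)) :
    ∃ S : Set (Fin n → ℝ), volume S = 0 ∧
      ∀ W ∉ S, ∃ U ∈ nhds W, IsOpen U ∧
        (∀ j, (∀ w ∈ U, 0 ≤ F j w) ∨ (∀ w ∈ U, F j w ≤ 0)) ∧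
        (∀ j, ∃ c : ℝ, (c = 0 ∨ c = 1) ∧ ∀ w ∈ U, max (F j w) 0 = c * F j w) := by
  classical
  refine ⟨⋃ j, ⋃ i, {W : Fin n → ℝ | MvPolynomial.eval W (p j i) = 0}, ?_, ?_⟩
  · refine measure_iUnion_null fun j => measure_iUnion_null fun i => ?_
    exact mv_zero_set_null n (p j i) (hp j i)
  · intro W hW
    have hFne : ∀ j, F j W ≠ 0 := by
      intro j hj
      obtain ⟨i, hi⟩ := hpiece j W
      exact hW (Set.mem_iUnion.mpr ⟨j, Set.mem_iUnion.mpr ⟨i, by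
        simp only [Set.mem_setOf_eq, ← hi]; exact hj⟩⟩)
    set U : Set (Fin n → ℝ) :=
      ⋂ j, (F j) ⁻¹' (if 0 < F j W then Set.Ioi 0 else Set.Iio 0) with hU
    have hUopen : IsOpen U := by
      refine isOpen_iInter_of_finite fun j => ?_
      by_cases h : 0 < F j W
      · simpa [h] using isOpen_Ioi.preimage (hcont j)
      · simpa [h] using isOpen_Iio.preimage (hcont j)
    have hWU : W ∈ U := by
      refine Set.mem_iInter.mpr fun j => ?_
      by_cases h : 0 < F j W
      · simp only [Set.mem_preimage, if_pos h]; exact h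
      · have : F j W < 0 := lt_of_le_of_ne (not_lt.mp h) (hFne j)
        simpa [h] using this
    have hsign : ∀ j, ∀ w ∈ U,
        (0 < F j W → 0 < F j w) ∧ (¬ 0 < F j W → F j w < 0) := by
      intro j w hw
      have := Set.mem_iInter.mp hw j
      constructor
      · intro h; simpa [h] using this
      · intro h; simpa [h] using this
    refine ⟨U, hUopen.mem_nhds hWU, hUopen, ?_, ?_⟩
    · intro j
      by_cases h : 0 < F j W
      · exact Or.inl fun w hw => le_of_lt ((hsign j w hw).1 h)
      · exact Or.inr fun w hw => le_of_lt ((hsign j w hw).2 h)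
    · intro j
      by_cases h : 0 < F j W
      · refine ⟨1, Or.inr rfl, fun w hw => ?_⟩
        have := (hsign j w hw).1 h
        rw [max_eq_left this.le, one_mul]
      · refine ⟨0, Or.inl rfl, fun w hw => ?_⟩
        have := (hsign j w hw).2 h
        rw [max_eq_right this.le, zero_mul]
end

section
/- Fix an integer k ≥ 2. The function d ↦ sin²(πk/d)/(k² sin²(π/d)) is strictly increasing in d for integer (or real) d ≥ 2k, and tends to 1 as d → ∞. -/
open Real Filter

/-- The key derivative-sign fact: `k cos(kx) sin x - cos x sin(kx) < 0` for `0 < x ≤ π/(2k)`. -/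
private lemma N_neg (c : ℝ) (hc : 2 ≤ c) {x : ℝ} (hx : 0 < x) (hx2 : x ≤ Real.pi / (2 * c)) :
    c * Real.cos (c * x) * Real.sin x - Real.cos x * Real.sin (c * x) < 0 := by
  have hc0 : 0 < c := by linarith
  set N : ℝ → ℝ := fun y => c * Real.cos (c * y) * Real.sin y - Real.cos y * Real.sin (c * y)
    with hN
  have hderiv : ∀ y : ℝ, HasDerivAt N ((1 - c ^ 2) * Real.sin (c * y) * Real.sin y) y := by
    intro y
    have hky : HasDerivAt (fun y : ℝ => c * y) c y := by
      simpa using (hasDerivAt_id y).const_mul c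
    have hcos : HasDerivAt (fun y : ℝ => Real.cos (c * y)) (-Real.sin (c * y) * c) y :=
      (Real.hasDerivAt_cos (c * y)).comp y hky
    have hsin : HasDerivAt (fun y : ℝ => Real.sin (c * y)) (Real.cos (c * y) * c) y :=
      (Real.hasDerivAt_sin (c * y)).comp y hky
    have h := ((hcos.const_mul c).mul (Real.hasDerivAt_sin y)).sub
      ((Real.hasDerivAt_cos y).mul hsin)
    have e : (1 - c ^ 2) * Real.sin (c * y) * Real.sin y = c * (-Real.sin (c * y) * c) * Real.sin y + c * Real.cos (c * y) * Real.cos y - (-Real.sin y * Real.sin (c * y) + Real.cos y * (Real.cos (c * y) * c)) := by ring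
    rw [e]
    exact h
  have hanti : StrictAntiOn N (Set.Icc 0 (Real.pi / (2 * c))) := by
    apply strictAntiOn_of_deriv_neg (convex_Icc _ _)
    · exact Continuous.continuousOn (by fun_prop)
    · intro y hy
      rw [interior_Icc] at hy
      rw [(hderiv y).deriv]
      have hy1 : 0 < y := hy.1
      have hy2 : y < Real.pi / (2 * c) := hy.2
      have hcy : 0 < c * y := by positivity
      have hcy2 : c * y < Real.pi / 2 := by
        have : y < Real.pi / (2 * c) := hy2
        calc c * y < c * (Real.pi / (2 * c)) := by
              exact mul_lt_mul_of_pos_left hy2 hc0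
          _ = Real.pi / 2 := by field_simp
      have hs1 : 0 < Real.sin (c * y) :=
        Real.sin_pos_of_pos_of_lt_pi hcy (lt_trans hcy2 (by linarith [Real.pi_pos]))
      have hs2 : 0 < Real.sin y :=
        Real.sin_pos_of_pos_of_lt_pi hy1 (by nlinarith [Real.pi_pos])
      have : (1 : ℝ) - c ^ 2 < 0 := by nlinarith
      nlinarith [mul_pos hs1 hs2]
  have h0 : N 0 = 0 := by simp [hN]
  have hxmem : x ∈ Set.Icc (0:ℝ) (Real.pi / (2 * c)) := ⟨le_of_lt hx, hx2⟩
  have h0mem : (0:ℝ) ∈ Set.Icc (0:ℝ) (Real.pi / (2 * c)) := by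
    constructor
    · exact le_refl 0
    · positivity
  have := hanti h0mem hxmem hx
  rw [h0] at this
  simpa [hN] using this

private lemma g_anti (c : ℝ) (hc : 2 ≤ c) :
    StrictAntiOn (fun x => Real.sin (c * x) / (c * Real.sin x))
      (Set.Ioc 0 (Real.pi / (2 * c))) := by
  have hc0 : 0 < c := by linarith
  apply strictAntiOn_of_deriv_neg (convex_Ioc _ _)
  · apply ContinuousOn.div (by fun_prop) (by fun_prop)
    intro x hx
    have hx1 : 0 < x := hx.1
    have hxlt : x < Real.pi := by
      have : Real.pi / (2 * c) < Real.pi := by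
        have := Real.pi_pos
        rw [div_lt_iff₀ (by positivity)]
        nlinarith
      linarith [hx.2]
    have := Real.sin_pos_of_pos_of_lt_pi hx1 hxlt
    positivity
  · intro x hx
    rw [interior_Ioc] at hx
    have hx1 : 0 < x := hx.1
    have hx2 : x < Real.pi / (2 * c) := hx.2
    have hxlt : x < Real.pi := by
      have : Real.pi / (2 * c) < Real.pi := by
        have := Real.pi_pos
        rw [div_lt_iff₀ (by positivity)]
        nlinarith
      linarith
    have hsx : 0 < Real.sin x := Real.sin_pos_of_pos_of_lt_pi hx1 hxlt
    have hky : HasDerivAt (fun y : ℝ => c * y) c x := by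
      simpa using (hasDerivAt_id x).const_mul c
    have hnum : HasDerivAt (fun y : ℝ => Real.sin (c * y)) (Real.cos (c * x) * c) x :=
      (Real.hasDerivAt_sin (c * x)).comp x hky
    have hden : HasDerivAt (fun y : ℝ => c * Real.sin y) (c * Real.cos x) x :=
      (Real.hasDerivAt_sin x).const_mul c
    have hden0 : c * Real.sin x ≠ 0 := by positivity
    have hD := hnum.div hden hden0
    have hD' : HasDerivAt (fun y => Real.sin (c * y) / (c * Real.sin y)) _ x := hD
    rw [hD'.deriv]
    have hNneg := N_neg c hc hx1 (le_of_lt hx2)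
    apply div_neg_of_neg_of_pos
    · nlinarith
    · positivity

/-- for fixed integer `k ≥ 2`, the adjacent-frequency correlation magnitude
`d ↦ sin²(πk/d)/(k² sin²(π/d))` is strictly increasing on real `d ≥ 2k` and tends to `1`
as `d → ∞`. -/
theorem adjacent_corr_strictMono_and_tendsto_one (k : ℕ) (hk : 2 ≤ k) :
    StrictMonoOn
        (fun d : ℝ => Real.sin (Real.pi * k / d) ^ 2 /
          ((k : ℝ) ^ 2 * Real.sin (Real.pi / d) ^ 2))
        (Set.Ici ((2 * k : ℕ) : ℝ)) ∧
      Tendsto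
        (fun d : ℝ => Real.sin (Real.pi * k / d) ^ 2 /
          ((k : ℝ) ^ 2 * Real.sin (Real.pi / d) ^ 2))
        atTop (nhds 1) := by
  have hc : (2 : ℝ) ≤ (k : ℝ) := by exact_mod_cast hk
  have hc0 : (0 : ℝ) < k := by linarith
  set c : ℝ := (k : ℝ) with hcdef
  have hrw : ∀ d : ℝ, Real.sin (Real.pi * k / d) ^ 2 / ((k : ℝ) ^ 2 * Real.sin (Real.pi / d) ^ 2)
      = (Real.sin (c * (Real.pi / d)) / (c * Real.sin (Real.pi / d))) ^ 2 := by
    intro d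
    rw [div_pow, mul_pow, show Real.pi * k / d = c * (Real.pi / d) by rw [hcdef]; ring]
  constructor
  · intro d1 hd1 d2 hd2 hlt
    simp only [Set.mem_Ici] at hd1 hd2
    have h2k : ((2 * k : ℕ) : ℝ) = 2 * c := by push_cast [hcdef]; ring
    rw [h2k] at hd1 hd2
    have hd1pos : 0 < d1 := by linarith
    have hd2pos : 0 < d2 := by linarith
    have hpi := Real.pi_pos
    have hx1mem : Real.pi / d1 ∈ Set.Ioc 0 (Real.pi / (2 * c)) :=
      ⟨by positivity, div_le_div_of_nonneg_left (le_of_lt hpi) (by positivity) hd1⟩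
    have hx2mem : Real.pi / d2 ∈ Set.Ioc 0 (Real.pi / (2 * c)) :=
      ⟨by positivity, div_le_div_of_nonneg_left (le_of_lt hpi) (by positivity) (by linarith)⟩
    have hxlt : Real.pi / d2 < Real.pi / d1 := by
      apply div_lt_div_of_pos_left hpi hd1pos hlt
    have hg := g_anti c hc hx2mem hx1mem hxlt
    -- g (π/d1) < g (π/d2), and g (π/d1) ≥ 0
    have hgpos : 0 < Real.sin (c * (Real.pi / d1)) / (c * Real.sin (Real.pi / d1)) := by
      have hx1 : 0 < Real.pi / d1 := hx1mem.1
      have hcx : 0 < c * (Real.pi / d1) := by positivity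
      have hcxle : c * (Real.pi / d1) ≤ Real.pi / 2 := by
        calc c * (Real.pi / d1) ≤ c * (Real.pi / (2 * c)) :=
              mul_le_mul_of_nonneg_left hx1mem.2 (le_of_lt (by linarith : (0:ℝ) < c))
          _ = Real.pi / 2 := by field_simp
      have hs1 : 0 < Real.sin (c * (Real.pi / d1)) :=
        Real.sin_pos_of_pos_of_lt_pi hcx (by linarith)
      have hxlt' : Real.pi / d1 < Real.pi := by
        rw [div_lt_iff₀ hd1pos]; nlinarith
      have hs2 : 0 < Real.sin (Real.pi / d1) :=
        Real.sin_pos_of_pos_of_lt_pi hx1 hxlt'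
      positivity
    simp only [hrw]
    exact (hrw d1).trans_lt ((pow_lt_pow_left₀ hg (le_of_lt hgpos) two_ne_zero).trans_eq (hrw d2).symm)
  · -- the limit
    have hslope : Tendsto (fun t : ℝ => Real.sin t / t) (nhdsWithin 0 {(0:ℝ)}ᶜ) (nhds 1) := by
      have h := (Real.hasDerivAt_sin 0)
      rw [hasDerivAt_iff_tendsto_slope] at h
      simp only [Real.cos_zero] at h
      exact h.congr fun t => by simp [slope_def_field]
    have hx0 : Tendsto (fun d : ℝ => Real.pi / d) atTop (nhdsWithin 0 {(0:ℝ)}ᶜ) := by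
      apply tendsto_nhdsWithin_of_tendsto_nhds_of_eventually_within
      · exact Tendsto.div_atTop tendsto_const_nhds tendsto_id
      · filter_upwards [eventually_gt_atTop (0:ℝ)] with d hd
        have := Real.pi_pos
        simp only [Set.mem_compl_iff, Set.mem_singleton_iff]
        positivity
    have hkx0 : Tendsto (fun d : ℝ => c * (Real.pi / d)) atTop (nhdsWithin 0 {(0:ℝ)}ᶜ) := by
      apply tendsto_nhdsWithin_of_tendsto_nhds_of_eventually_within
      · have : Tendsto (fun d : ℝ => c * (Real.pi / d)) atTop (nhds (c * 0)) :=
          (Tendsto.div_atTop tendsto_const_nhds tendsto_id).const_mul c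
        simpa using this
      · filter_upwards [eventually_gt_atTop (0:ℝ)] with d hd
        have := Real.pi_pos
        simp only [Set.mem_compl_iff, Set.mem_singleton_iff]
        positivity
    have h1 : Tendsto (fun d : ℝ => Real.sin (c * (Real.pi / d)) / (c * (Real.pi / d)))
        atTop (nhds 1) := hslope.comp hkx0
    have h2 : Tendsto (fun d : ℝ => Real.sin (Real.pi / d) / (Real.pi / d))
        atTop (nhds 1) := hslope.comp hx0
    have h2' : Tendsto (fun d : ℝ => (Real.pi / d) / Real.sin (Real.pi / d))
        atTop (nhds 1) := by
      have := (h2.inv₀ one_ne_zero)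
      simp only [inv_div, inv_one] at this
      exact this
    have hprod : Tendsto (fun d : ℝ =>
        (Real.sin (c * (Real.pi / d)) / (c * (Real.pi / d))) * ((Real.pi / d) / Real.sin (Real.pi / d)))
        atTop (nhds 1) := by
      simpa using h1.mul h2'
    have hsq : Tendsto (fun d : ℝ =>
        ((Real.sin (c * (Real.pi / d)) / (c * (Real.pi / d))) * ((Real.pi / d) / Real.sin (Real.pi / d))) ^ 2)
        atTop (nhds 1) := by
      simpa using hprod.pow 2
    refine hsq.congr' ?_
    filter_upwards [eventually_gt_atTop (0:ℝ)] with d hd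
    have hpi := Real.pi_pos
    have hx : (0:ℝ) < Real.pi / d := by positivity
    rw [hrw d]
    rcases eq_or_ne (Real.sin (Real.pi / d)) 0 with hs | hs
    · rw [hs]
      simp
    · congr 1
      field_simp
end
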